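/- Let X be a Banach space with a 1-unconditional Schauder decomposition into subspaces Xᵢ, and suppose for each i there exist δᵢ > 0 and a map ζᵢ : ℓ₂ → S(Xᵢ) such that (a) ‖x−y‖ ≤ i implies ‖ζᵢ(x)−ζᵢ(y)‖ ≤ δᵢ/(i·2ⁱ), and (b) liminf over t→∞ of inf{‖ζᵢ(x)−ζᵢ(y)‖ : ‖x−y‖ ≥ t} ≥ δᵢ. Fix x₀ ∈ ℓ₂. Then f(x) = Σᵢ (i/δᵢ)(ζᵢ(x) − ζᵢ(x₀)) is a well-defined coarse embedding of ℓ₂ into X. -/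
import Mathlib


/-- The separable Hilbert space `ℓ₂`. -/
noncomputable abbrev ellTwo : Type := lp (fun _ : ℕ => ℝ) 2

set_option maxHeartbeats 1000000 in
/-- Let `X` be a Banach space with a 1-unconditional Schauder decomposition into
subspaces `Xᵢ` (i ≥ 1, indexed here by `i+1`), and suppose for each `i` there are
`δᵢ > 0` and maps `ζᵢ : ℓ₂ → S(Xᵢ)` such that `‖x−y‖ ≤ i` implies
`‖ζᵢ(x)−ζᵢ(y)‖ ≤ δᵢ/(i·2ⁱ)`, and `liminf_{t→∞} inf{‖ζᵢ(x)−ζᵢ(y)‖ : ‖x−y‖ ≥ t} ≥ δᵢ`.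
Then `f(x) = Σᵢ (i/δᵢ)(ζᵢ(x) − ζᵢ(x₀))` is a well-defined coarse embedding of `ℓ₂`
into `X`. -/
theorem coarseEmbedding_ellTwo_into_unconditional {X : Type*}
    [NormedAddCommGroup X] [NormedSpace ℝ X] [CompleteSpace X]
    (Xsub : ℕ → Submodule ℝ X)
    -- 1-unconditionality of the decomposition:
    (huncond : ∀ y : ℕ → X, (∀ i, y i ∈ Xsub i) → Summable y →
      ∀ ε : ℕ → ℝ, (∀ i, ε i = 1 ∨ ε i = -1) →
        Summable (fun i => ε i • y i) ∧ ‖∑' i, ε i • y i‖ = ‖∑' i, y i‖)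
    (δ : ℕ → ℝ) (hδ : ∀ i, 0 < δ i)
    (ζ : ℕ → ellTwo → X)
    (hmem : ∀ i x, ζ i x ∈ Xsub i)
    (hsphere : ∀ i x, ‖ζ i x‖ = 1)
    (ha : ∀ (i : ℕ) (x y : ellTwo), ‖x - y‖ ≤ ((i : ℝ) + 1) →
      ‖ζ i x - ζ i y‖ ≤ δ i / (((i : ℝ) + 1) * 2 ^ (i + 1)))
    (hb : ∀ (i : ℕ) (c : ℝ), c < δ i → ∃ t : ℝ, ∀ x y : ellTwo,
      t ≤ ‖x - y‖ → c ≤ ‖ζ i x - ζ i y‖)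
    (x₀ : ellTwo) :
    ∃ F : ellTwo → X,
      (∀ x : ellTwo,
        Summable (fun i : ℕ => (((i : ℝ) + 1) / δ i) • (ζ i x - ζ i x₀)) ∧
        F x = ∑' i : ℕ, (((i : ℝ) + 1) / δ i) • (ζ i x - ζ i x₀)) ∧
      ∃ ρ₁ ρ₂ : ℝ → ℝ,
        (∀ x y : ellTwo, ρ₁ (‖x - y‖) ≤ ‖F x - F y‖ ∧ ‖F x - F y‖ ≤ ρ₂ (‖x - y‖)) ∧
        Filter.Tendsto ρ₁ Filter.atTop Filter.atTop := by
  classical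
  have hbound : ∀ (x y : ellTwo) (i : ℕ), ‖x - y‖ ≤ (i : ℝ) + 1 →
      ‖(((i : ℝ) + 1) / δ i) • (ζ i x - ζ i y)‖ ≤ (1 / 2 : ℝ) ^ (i + 1) := by
    intro x y i h
    have hδi := hδ i
    have hi1 : (0:ℝ) < (i : ℝ) + 1 := by positivity
    have h2p : (0:ℝ) < 2 ^ (i + 1) := by positivity
    rw [norm_smul, Real.norm_eq_abs, abs_of_pos (by positivity)]
    have h1 := ha i x y h
    calc ((i : ℝ) + 1) / δ i * ‖ζ i x - ζ i y‖
        ≤ ((i : ℝ) + 1) / δ i * (δ i / (((i : ℝ) + 1) * 2 ^ (i + 1))) :=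
          mul_le_mul_of_nonneg_left h1 (by positivity)
      _ = (1 / 2 : ℝ) ^ (i + 1) := by
          rw [div_pow, one_pow]
          field_simp
  have hgeo : Summable (fun i : ℕ => (1 / 2 : ℝ) ^ i) :=
    summable_geometric_of_lt_one (by norm_num) (by norm_num)
  have hns : ∀ x y : ellTwo,
      Summable (fun i : ℕ => ‖(((i : ℝ) + 1) / δ i) • (ζ i x - ζ i y)‖) := by
    intro x y
    rw [← summable_nat_add_iff ⌈‖x - y‖⌉₊]
    refine Summable.of_nonneg_of_le (fun i => norm_nonneg _) (fun i => ?_) hgeo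
    have hle : ‖x - y‖ ≤ ((i + ⌈‖x - y‖⌉₊ : ℕ) : ℝ) + 1 := by
      have := Nat.le_ceil ‖x - y‖
      push_cast
      linarith
    refine le_trans (hbound x y _ hle) ?_
    exact pow_le_pow_of_le_one (by norm_num) (by norm_num) (by omega)
  have hproj : ∀ (y : ℕ → X), (∀ i, y i ∈ Xsub i) → Summable y →
      ∀ j, ‖y j‖ ≤ ‖∑' i, y i‖ := by
    intro y hy hsy j
    obtain ⟨hs', hn'⟩ := huncond y hy hsy (fun i => if i = j then 1 else -1)
      (fun i => by by_cases h : i = j <;> simp [h])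
    have key : ∑' i, y i + ∑' i, (if i = j then (1:ℝ) else -1) • y i = y j + y j := by
      rw [← Summable.tsum_add hsy hs']
      have h2 : ∀ i, y i + (if i = j then (1:ℝ) else -1) • y i
          = if i = j then y j + y j else 0 := by
        intro i
        by_cases h : i = j <;> simp [h]
      rw [tsum_congr h2, tsum_ite_eq]
    have h3 : ‖y j + y j‖ ≤ ‖∑' i, y i‖ + ‖∑' i, (if i = j then (1:ℝ) else -1) • y i‖ :=
      key ▸ norm_add_le _ _
    have h4 : ‖y j + y j‖ = 2 * ‖y j‖ := by
      rw [← two_smul ℝ (y j), norm_smul]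
      simp
    rw [h4, hn'] at h3
    linarith
  have hsummg : ∀ x : ellTwo,
      Summable (fun i : ℕ => (((i : ℝ) + 1) / δ i) • (ζ i x - ζ i x₀)) :=
    fun x => (hns x x₀).of_norm
  have hdiff : ∀ x y : ellTwo,
      (∑' i : ℕ, (((i : ℝ) + 1) / δ i) • (ζ i x - ζ i x₀))
        - (∑' i : ℕ, (((i : ℝ) + 1) / δ i) • (ζ i y - ζ i x₀))
      = ∑' i : ℕ, (((i : ℝ) + 1) / δ i) • (ζ i x - ζ i y) := by
    intro x y
    rw [← Summable.tsum_sub (hsummg x) (hsummg y)]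
    refine tsum_congr fun i => ?_
    rw [← smul_sub]
    congr 1
    abel
  have hb2 : ∀ j : ℕ, ∃ t : ℝ, ∀ x y : ellTwo, t ≤ ‖x - y‖ → δ j / 2 ≤ ‖ζ j x - ζ j y‖ :=
    fun j => hb j (δ j / 2) (by linarith [hδ j])
  choose s hs using hb2
  set u : ℕ → ℝ := fun j => max (s j) j with hu
  refine ⟨fun x => ∑' i : ℕ, (((i : ℝ) + 1) / δ i) • (ζ i x - ζ i x₀),
    fun x => ⟨hsummg x, rfl⟩,
    fun r => (Nat.findGreatest (fun j => u j ≤ r) ⌈r⌉₊ : ℝ) / 2,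
    fun r => (∑ i ∈ Finset.range ⌈r⌉₊, 2 * ((i : ℝ) + 1) / δ i) + 1,
    fun x y => ⟨?_, ?_⟩, ?_⟩
  · -- lower bound
    simp only []
    rw [hdiff x y]
    set k := Nat.findGreatest (fun j => u j ≤ ‖x - y‖) ⌈‖x - y‖⌉₊ with hk
    rcases Nat.eq_zero_or_pos k with h0 | hpos
    · rw [h0]
      simp only [Nat.cast_zero, zero_div]
      exact norm_nonneg _
    · have hPk : u k ≤ ‖x - y‖ :=
        (Nat.findGreatest_eq_iff.mp hk.symm).2.1 (Nat.pos_iff_ne_zero.mp hpos)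
      have hsk : s k ≤ ‖x - y‖ := le_trans (le_max_left _ _) hPk
      have hζ : δ k / 2 ≤ ‖ζ k x - ζ k y‖ := hs k x y hsk
      have hmemY : ∀ i : ℕ, (((i : ℝ) + 1) / δ i) • (ζ i x - ζ i y) ∈ Xsub i :=
        fun i => Submodule.smul_mem _ _ (Submodule.sub_mem _ (hmem i x) (hmem i y))
      have hYnorm := hproj _ hmemY ((hns x y).of_norm) k
      have hδk := hδ k
      have hlow : ((k : ℝ) + 1) / 2 ≤ ‖(((k : ℝ) + 1) / δ k) • (ζ k x - ζ k y)‖ := by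
        rw [norm_smul, Real.norm_eq_abs, abs_of_pos (by positivity)]
        calc ((k : ℝ) + 1) / 2 = ((k : ℝ) + 1) / δ k * (δ k / 2) := by
              field_simp
          _ ≤ _ := mul_le_mul_of_nonneg_left hζ (by positivity)
      have hk2 : (k : ℝ) / 2 ≤ ((k : ℝ) + 1) / 2 := by linarith
      exact le_trans (le_trans hk2 hlow) hYnorm
  · -- upper bound
    simp only []
    rw [hdiff x y]
    have hgeo1 : Summable (fun i : ℕ => (1 / 2 : ℝ) ^ (i + 1)) :=
      (summable_nat_add_iff 1).mpr hgeo
    have hgeoval : ∑' i : ℕ, (1 / 2 : ℝ) ^ (i + 1) = 1 := by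
      simp only [pow_succ]
      rw [tsum_mul_right, tsum_geometric_of_lt_one (by norm_num) (by norm_num)]
      norm_num
    set N := ⌈‖x - y‖⌉₊ with hN
    calc ‖∑' i : ℕ, (((i : ℝ) + 1) / δ i) • (ζ i x - ζ i y)‖
        ≤ ∑' i : ℕ, ‖(((i : ℝ) + 1) / δ i) • (ζ i x - ζ i y)‖ :=
          norm_tsum_le_tsum_norm (hns x y)
      _ = (∑ i ∈ Finset.range N, ‖(((i : ℝ) + 1) / δ i) • (ζ i x - ζ i y)‖)
          + ∑' i : ℕ, ‖((((i + N : ℕ) : ℝ) + 1) / δ (i + N)) • (ζ (i + N) x - ζ (i + N) y)‖ :=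
          (Summable.sum_add_tsum_nat_add N (hns x y)).symm
      _ ≤ (∑ i ∈ Finset.range N, 2 * ((i : ℝ) + 1) / δ i) + 1 := by
          refine add_le_add (Finset.sum_le_sum fun i _ => ?_) ?_
          · have hδi := hδ i
            rw [norm_smul, Real.norm_eq_abs, abs_of_pos (by positivity)]
            have hζ2 : ‖ζ i x - ζ i y‖ ≤ 2 := by
              calc ‖ζ i x - ζ i y‖ ≤ ‖ζ i x‖ + ‖ζ i y‖ := norm_sub_le _ _
                _ = 2 := by rw [hsphere, hsphere]; norm_num
            calc ((i : ℝ) + 1) / δ i * ‖ζ i x - ζ i y‖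
                ≤ ((i : ℝ) + 1) / δ i * 2 := mul_le_mul_of_nonneg_left hζ2 (by positivity)
              _ = 2 * ((i : ℝ) + 1) / δ i := by ring
          · refine le_trans (Summable.tsum_le_tsum (fun i => ?_)
              ((summable_nat_add_iff N).mpr (hns x y)) hgeo1) (le_of_eq hgeoval)
            have hNle : ‖x - y‖ ≤ (N : ℝ) := by rw [hN]; exact Nat.le_ceil _
            have hle : ‖x - y‖ ≤ ((i + N : ℕ) : ℝ) + 1 := by push_cast; linarith
            exact le_trans (hbound x y _ hle)
              (pow_le_pow_of_le_one (by norm_num) (by norm_num) (by omega))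
  · -- tendsto
    rw [Filter.tendsto_atTop]
    intro b
    filter_upwards [Filter.eventually_ge_atTop (u ⌈2 * b⌉₊)] with r hr
    have h1 : ((⌈2 * b⌉₊ : ℕ) : ℝ) ≤ r := le_trans (le_max_right _ _) hr
    have h2 : ⌈2 * b⌉₊ ≤ ⌈r⌉₊ := by
      calc ⌈2 * b⌉₊ = ⌈((⌈2 * b⌉₊ : ℕ) : ℝ)⌉₊ := (Nat.ceil_natCast _).symm
        _ ≤ ⌈r⌉₊ := Nat.ceil_le_ceil h1
    have h3 : ⌈2 * b⌉₊ ≤ Nat.findGreatest (fun j => u j ≤ r) ⌈r⌉₊ :=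
      Nat.le_findGreatest h2 hr
    have h4 : 2 * b ≤ ((⌈2 * b⌉₊ : ℕ) : ℝ) := Nat.le_ceil _
    have h5 : ((⌈2 * b⌉₊ : ℕ) : ℝ) ≤ (Nat.findGreatest (fun j => u j ≤ r) ⌈r⌉₊ : ℝ) :=
      Nat.cast_le.mpr h3
    linarith
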